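/- arXiv:2503.01365 — 3 statements merged into one kernel-verified Lean document; each statement's English description precedes it below -/
import Mathlib

section
/- Let A, B be abelian groups equipped with cones A⁺, B⁺ (additive submonoids), and let u ∈ A⁺ be an order unit for (A,A⁺) and v ∈ B⁺ be an order unit for (B,B⁺). Then u ⊗ v is an order unit for A ⊗_ℤ B with respect to the tensor cone P, i.e., for every t ∈ A ⊗_ℤ B there exists n ∈ ℕ with n•(u ⊗ v) − t ∈ P. -/
open scoped TensorProduct

/-- If `u ∈ Ap` is an order unit for `(A, Ap)` and `v ∈ Bp` is an
order unit for `(B, Bp)`, then `u ⊗ₜ v` is an order unit for `A ⊗[ℤ] B` with respect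
to the tensor cone (the additive submonoid generated by pure tensors of positive
elements). -/
theorem stmt_1 {A B : Type*} [AddCommGroup A] [AddCommGroup B]
    (Ap : AddSubmonoid A) (Bp : AddSubmonoid B)
    (u : A) (v : B) (hu : u ∈ Ap) (hv : v ∈ Bp)
    (hu_unit : ∀ x : A, ∃ n : ℕ, n • u - x ∈ Ap)
    (hv_unit : ∀ y : B, ∃ n : ℕ, n • v - y ∈ Bp) :
    ∀ t : A ⊗[ℤ] B, ∃ n : ℕ,
      n • (u ⊗ₜ[ℤ] v) - t ∈ AddSubmonoid.closure
        {s : A ⊗[ℤ] B | ∃ a ∈ Ap, ∃ b ∈ Bp, s = a ⊗ₜ[ℤ] b} := by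
  set P := AddSubmonoid.closure
      {s : A ⊗[ℤ] B | ∃ a ∈ Ap, ∃ b ∈ Bp, s = a ⊗ₜ[ℤ] b} with hP
  have hpure : ∀ a ∈ Ap, ∀ b ∈ Bp, a ⊗ₜ[ℤ] b ∈ P := fun a ha b hb =>
    AddSubmonoid.subset_closure ⟨a, ha, b, hb, rfl⟩
  -- bound for positive pure tensors
  have hbound : ∀ a ∈ Ap, ∀ b ∈ Bp, ∃ k : ℕ, k • (u ⊗ₜ[ℤ] v) - a ⊗ₜ[ℤ] b ∈ P := by
    intro a ha b hb
    obtain ⟨k, hk⟩ := hu_unit a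
    obtain ⟨l, hl⟩ := hv_unit b
    refine ⟨k * l, ?_⟩
    have key : (k * l) • (u ⊗ₜ[ℤ] v) - a ⊗ₜ[ℤ] b
        = (k • u - a) ⊗ₜ[ℤ] b + (k • u) ⊗ₜ[ℤ] (l • v - b) := by
      simp only [TensorProduct.sub_tmul, TensorProduct.tmul_sub,
        TensorProduct.smul_tmul', TensorProduct.tmul_smul, mul_smul, smul_comm l k]
      abel
    rw [key]
    exact P.add_mem (hpure _ hk _ hb) (hpure _ (Ap.nsmul_mem hu k) _ hl)
  -- pure tensor case
  have hcase : ∀ (a : A) (b : B), ∃ n : ℕ, n • (u ⊗ₜ[ℤ] v) - a ⊗ₜ[ℤ] b ∈ P := by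
    intro a b
    obtain ⟨p, hp⟩ := hu_unit a
    obtain ⟨q, hq⟩ := hv_unit b
    obtain ⟨k, hk⟩ := hbound _ hp _ hq
    refine ⟨p * q + k, ?_⟩
    have key : (p * q + k) • (u ⊗ₜ[ℤ] v) - a ⊗ₜ[ℤ] b
        = (k • (u ⊗ₜ[ℤ] v) - (p • u - a) ⊗ₜ[ℤ] (q • v - b))
          + p • (u ⊗ₜ[ℤ] (q • v - b)) + q • ((p • u - a) ⊗ₜ[ℤ] v) := by
      simp only [TensorProduct.sub_tmul, TensorProduct.tmul_sub,
        TensorProduct.smul_tmul', TensorProduct.tmul_smul, add_smul, mul_smul,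
        smul_sub, smul_comm q p]
      abel
    rw [key]
    exact P.add_mem (P.add_mem hk (P.nsmul_mem (hpure _ hu _ hq) p))
      (P.nsmul_mem (hpure _ hp _ hv) q)
  intro t
  induction t with
  | zero => exact ⟨0, by simpa using P.zero_mem⟩
  | tmul a b => exact hcase a b
  | add x y hx hy =>
    obtain ⟨n, hn⟩ := hx
    obtain ⟨m, hm⟩ := hy
    refine ⟨n + m, ?_⟩
    have : (n + m) • (u ⊗ₜ[ℤ] v) - (x + y)
        = (n • (u ⊗ₜ[ℤ] v) - x) + (m • (u ⊗ₜ[ℤ] v) - y) := by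
      rw [add_smul]; abel
    rw [this]
    exact P.add_mem hn hm
end

section
/- Let G = {(x,y,z) ∈ ℤ³ : x + y + z is even}, a subgroup of ℤ³, with cone G⁺ = {(0,y,z) ∈ G : y and z are even}. Let A = ℚ × G with the lexicographic cone A⁺ = {(q,g) : 0 < q} ∪ {(0,g) : g ∈ G⁺}. Then (A,A⁺) satisfies interpolation: whenever a₁, a₂, b₁, b₂ ∈ A satisfy b_j − a_i ∈ A⁺ for all i,j ∈ {1,2}, there exists c ∈ A with c − a_i ∈ A⁺ and b_j − c ∈ A⁺ for all i,j ∈ {1,2}. -/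
/-- The subgroup `G = {(x,y,z) ∈ ℤ³ : x + y + z even}`. -/
def G : AddSubgroup (ℤ × ℤ × ℤ) where
  carrier := {g | Even (g.1 + g.2.1 + g.2.2)}
  zero_mem' := by simp
  add_mem' := by
    intro a b ha hb
    simp only [Set.mem_setOf_eq, Int.even_iff, Prod.fst_add, Prod.snd_add] at *
    omega
  neg_mem' := by
    intro a ha
    simp only [Set.mem_setOf_eq, Int.even_iff, Prod.fst_neg, Prod.snd_neg] at *
    omega

/-- The lexicographic cone on `A = ℚ × G`: first coordinate strictly positive, or first
coordinate zero and second coordinate in `G⁺ = {(0,y,z) ∈ G : y, z even}`. -/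
def Acone : AddSubmonoid (ℚ × G) where
  carrier := {x | 0 < x.1 ∨ (x.1 = 0 ∧ (x.2 : ℤ × ℤ × ℤ).1 = 0 ∧
      Even (x.2 : ℤ × ℤ × ℤ).2.1 ∧ Even (x.2 : ℤ × ℤ × ℤ).2.2)}
  zero_mem' := by
    right
    simp
  add_mem' := by
    intro a b ha hb
    simp only [Set.mem_setOf_eq, Prod.fst_add, Prod.snd_add, AddSubgroup.coe_add,
      Prod.fst_add, Prod.snd_add] at *
    rcases ha with h1 | ⟨h1, h2, h3, h4⟩ <;> rcases hb with g1 | ⟨g1, g2, g3, g4⟩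
    · exact Or.inl (add_pos h1 g1)
    · exact Or.inl (by simpa [g1] using h1)
    · exact Or.inl (by simpa [h1] using g1)
    · exact Or.inr ⟨by simp [h1, g1], by simp [h2, g2], h3.add g3, h4.add g4⟩


lemma mem_Acone (x : ℚ × G) : x ∈ Acone ↔ 0 < x.1 ∨ (x.1 = 0 ∧ (x.2 : ℤ × ℤ × ℤ).1 = 0 ∧
      Even (x.2 : ℤ × ℤ × ℤ).2.1 ∧ Even (x.2 : ℤ × ℤ × ℤ).2.2) := Iff.rfl

lemma Acone_sub {u v : ℚ × G} (hu : u ∈ Acone) (hv : v ∈ Acone) (hv0 : v.1 = 0) :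
    u - v ∈ Acone := by
  rw [mem_Acone] at *
  rcases hv with h | ⟨_, v1, v2, v3⟩
  · exact absurd (hv0 ▸ h) (lt_irrefl 0)
  rcases hu with h | ⟨u0, u1, u2, u3⟩
  · left; simpa [Prod.fst_sub, hv0] using h
  · right
    refine ⟨by simp [Prod.fst_sub, hv0, u0], ?_, ?_, ?_⟩ <;>
      simp [Prod.snd_sub, AddSubgroup.coe_sub, u1, v1, u2.sub v2, u3.sub v3]

lemma Acone_le {u v : ℚ × G} (h : v - u ∈ Acone) : u.1 ≤ v.1 := by
  rw [mem_Acone] at h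
  rcases h with h | ⟨h, _⟩ <;> simp [Prod.fst_sub] at h <;> linarith

/-- `(A, A⁺)` satisfies interpolation: whenever
`b_j − a_i ∈ A⁺` for all `i, j ∈ {1,2}`, there is `c` with `c − a_i ∈ A⁺` and
`b_j − c ∈ A⁺` for all `i, j`. -/
theorem stmt_6 :
    ∀ a₁ a₂ b₁ b₂ : ℚ × G,
      b₁ - a₁ ∈ Acone → b₁ - a₂ ∈ Acone → b₂ - a₁ ∈ Acone → b₂ - a₂ ∈ Acone →
      ∃ c : ℚ × G,
        c - a₁ ∈ Acone ∧ c - a₂ ∈ Acone ∧ b₁ - c ∈ Acone ∧ b₂ - c ∈ Acone := by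
  intro a₁ a₂ b₁ b₂ h11 h21 h12 h22
  have l11 := Acone_le h11
  have l21 := Acone_le h21
  have l12 := Acone_le h12
  have l22 := Acone_le h22
  by_cases hlt : max a₁.1 a₂.1 < min b₁.1 b₂.1
  · refine ⟨((max a₁.1 a₂.1 + min b₁.1 b₂.1) / 2, 0), ?_, ?_, ?_, ?_⟩ <;>
      rw [mem_Acone] <;> left <;> simp only [Prod.fst_sub] <;>
      [ (have := le_max_left a₁.1 a₂.1);
        (have := le_max_right a₁.1 a₂.1);
        (have := min_le_left b₁.1 b₂.1);
        (have := min_le_right b₁.1 b₂.1)] <;> linarith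
  · push_neg at hlt
    have key : ∀ a a' : ℚ × G, a.1 = max a₁.1 a₂.1 → (b₁ - a' ∈ Acone) → (b₂ - a' ∈ Acone) →
        (b₁ - a ∈ Acone) → (b₂ - a ∈ Acone) → a'.1 ≤ a.1 → a - a' ∈ Acone := by
      intro a a' hm h1' h2' h1 h2 hle
      rcases lt_or_eq_of_le hle with h | h
      · left; simp only [Prod.fst_sub]; linarith
      · have hb : b₁.1 = a.1 ∨ b₂.1 = a.1 := by
          rcases min_le_iff.mp hlt with hb | hb
          · left; have := Acone_le h1; rw [hm]; linarith
          · right; have := Acone_le h2; rw [hm]; linarith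
        rcases hb with hb | hb
        · have : a - a' = (b₁ - a') - (b₁ - a) := by abel
          rw [this]
          exact Acone_sub h1' h1 (by simp [Prod.fst_sub, hb])
        · have : a - a' = (b₂ - a') - (b₂ - a) := by abel
          rw [this]
          exact Acone_sub h2' h2 (by simp [Prod.fst_sub, hb])
    rcases le_total a₂.1 a₁.1 with h | h
    · exact ⟨a₁, by simpa using Acone.zero_mem,
        key a₁ a₂ (by simp [max_eq_left h]) h21 h22 h11 h12 h, h11, h12⟩
    · exact ⟨a₂, key a₂ a₁ (by simp [max_eq_right h]) h11 h12 h21 h22 h,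
        by simpa using Acone.zero_mem, h21, h22⟩
end

section
/- Let B = ℚ × ℤ with cone B⁺ = {(q,n) : 0 < q} ∪ {(0,n) : n is even}. Then (B,B⁺) satisfies interpolation (whenever a₁, a₂, b₁, b₂ ∈ B satisfy b_j − a_i ∈ B⁺ for all i,j ∈ {1,2}, there exists c ∈ B with c − a_i ∈ B⁺ and b_j − c ∈ B⁺ for all i,j ∈ {1,2}), and v_B = (1,0) ∈ B⁺ is an order unit for (B,B⁺): for every x ∈ B there exists n ∈ ℕ with n•v_B − x ∈ B⁺. -/
/-- The cone on `B = ℚ × ℤ`: first coordinate strictly positive, or first coordinate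
zero and second coordinate even. -/
def Bcone : AddSubmonoid (ℚ × ℤ) where
  carrier := {x | 0 < x.1 ∨ (x.1 = 0 ∧ Even x.2)}
  zero_mem' := by
    right
    simp
  add_mem' := by
    intro a b ha hb
    simp only [Set.mem_setOf_eq, Prod.fst_add, Prod.snd_add] at *
    rcases ha with h1 | ⟨h1, h2⟩ <;> rcases hb with g1 | ⟨g1, g2⟩
    · exact Or.inl (add_pos h1 g1)
    · exact Or.inl (by simpa [g1] using h1)
    · exact Or.inl (by simpa [h1] using g1)
    · exact Or.inr ⟨by simp [h1, g1], h2.add g2⟩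

lemma mem_Bcone (x : ℚ × ℤ) : x ∈ Bcone ↔ 0 < x.1 ∨ (x.1 = 0 ∧ Even x.2) := Iff.rfl

lemma interp_aux (a₁ a₂ b₁ b₂ : ℚ × ℤ) (hle : a₁.1 ≤ a₂.1)
    (h11 : b₁ - a₁ ∈ Bcone) (h12 : b₁ - a₂ ∈ Bcone)
    (h21 : b₂ - a₁ ∈ Bcone) (h22 : b₂ - a₂ ∈ Bcone) :
    ∃ c : ℚ × ℤ,
      c - a₁ ∈ Bcone ∧ c - a₂ ∈ Bcone ∧ b₁ - c ∈ Bcone ∧ b₂ - c ∈ Bcone := by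
  simp only [mem_Bcone, Prod.fst_sub, Prod.snd_sub, sub_pos, sub_eq_zero] at *
  by_cases hb : a₂.1 < b₁.1 ∧ a₂.1 < b₂.1
  · -- strict case: put c strictly between
    set m := min b₁.1 b₂.1 with hm
    have ham : a₂.1 < m := lt_min hb.1 hb.2
    refine ⟨((a₂.1 + m) / 2, 0), ?_, ?_, ?_, ?_⟩
    · exact Or.inl (lt_of_le_of_lt hle (by linarith))
    · exact Or.inl (by simp; linarith)
    · exact Or.inl (by have := min_le_left b₁.1 b₂.1; simp; linarith)
    · exact Or.inl (by have := min_le_right b₁.1 b₂.1; simp; linarith)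
  · -- some b_j.1 = a₂.1; take c = a₂
    push_neg at hb
    refine ⟨a₂, ?_, Or.inr ⟨rfl, by simp⟩, h12, h22⟩
    rcases lt_or_eq_of_le hle with h | h
    · exact Or.inl h
    · right
      refine ⟨h.symm, ?_⟩
      -- a₁.1 = a₂.1; find a b_j with b_j.1 = a₂.1 and use parity
      by_cases h1eq : b₁.1 = a₂.1
      · rcases h12 with h' | ⟨_, he2⟩
        · exact absurd h' (by rw [h1eq]; exact lt_irrefl _)
        rcases h11 with h' | ⟨_, he1⟩
        · exact absurd h' (by rw [h1eq, ← h]; exact lt_irrefl _)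
        have : Even (a₂.2 - a₁.2) := by
          have := he1.sub he2
          simpa [sub_sub_sub_cancel_left] using this
        exact this
      · have hb1 := lt_of_le_of_ne (by rcases h12 with h'|⟨h',_⟩; exact le_of_lt h'; exact le_of_eq h'.symm) (Ne.symm h1eq)
        have hb2lt := hb hb1
        have h2eq : b₂.1 = a₂.1 := le_antisymm hb2lt (by rcases h22 with h'|⟨h',_⟩; exact le_of_lt h'; exact le_of_eq h'.symm)
        rcases h22 with h' | ⟨_, he2⟩
        · exact absurd h' (by rw [h2eq]; exact lt_irrefl _)
        rcases h21 with h' | ⟨_, he1⟩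
        · exact absurd h' (by rw [h2eq, ← h]; exact lt_irrefl _)
        have := he1.sub he2
        simpa [sub_sub_sub_cancel_left] using this

/-- `(B, B⁺)` satisfies interpolation, and `v_B = (1, 0)` belongs to
`B⁺` and is an order unit for `(B, B⁺)`. -/
theorem stmt_7 :
    (∀ a₁ a₂ b₁ b₂ : ℚ × ℤ,
      b₁ - a₁ ∈ Bcone → b₁ - a₂ ∈ Bcone → b₂ - a₁ ∈ Bcone → b₂ - a₂ ∈ Bcone →
      ∃ c : ℚ × ℤ,
        c - a₁ ∈ Bcone ∧ c - a₂ ∈ Bcone ∧ b₁ - c ∈ Bcone ∧ b₂ - c ∈ Bcone) ∧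
    ((1, 0) : ℚ × ℤ) ∈ Bcone ∧
      ∀ x : ℚ × ℤ, ∃ n : ℕ, n • ((1, 0) : ℚ × ℤ) - x ∈ Bcone := by
  refine ⟨?_, Or.inl (by norm_num), ?_⟩
  · intro a₁ a₂ b₁ b₂ h11 h12 h21 h22
    rcases le_total a₁.1 a₂.1 with h | h
    · exact interp_aux a₁ a₂ b₁ b₂ h h11 h12 h21 h22
    · obtain ⟨c, c2, c1, cb1, cb2⟩ := interp_aux a₂ a₁ b₁ b₂ h h12 h11 h22 h21
      exact ⟨c, c1, c2, cb1, cb2⟩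
  · intro x
    obtain ⟨n, hn⟩ := exists_nat_gt x.1
    refine ⟨n, Or.inl ?_⟩
    simp [sub_pos]
    calc x.1 < n := hn
    _ ≤ _ := by simp
end
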